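/- Under the SPS setup, suppose additionally that ρ_k ≤ ρ̄ for all k. Then for every p* = (z*, w_1*, …, w_{n+1}*) ∈ S and every k, almost surely E[ ‖Σ_{i=1}^{n+1} y_i^k‖² + Σ_{i=1}^{n+1} ‖x_i^k − (1/(n+1)) Σ_{j=1}^{n+1} x_j^k‖² | 𝔉_k ] ≤ C₁ ‖p^k − p*‖² + C₂. -/

import Mathlib

open MeasureTheory Filter
open scoped RealInnerProductSpace BigOperators NNReal

noncomputable section

/-- `Ed d` is Euclidean space `ℝ^d`. -/
abbrev Ed (d : ℕ) := EuclideanSpace ℝ (Fin d)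

/-- A set-valued operator `A : ℝ^d → Set (ℝ^d)` is monotone. -/
def IsMonotoneOp {d : ℕ} (A : Ed d → Set (Ed d)) : Prop :=
  ∀ ⦃x y u v : Ed d⦄, u ∈ A x → v ∈ A y → 0 ≤ ⟪u - v, x - y⟫

/-- A set-valued operator is maximal monotone: monotone and its graph admits
no proper monotone extension. -/
def IsMaximalMonotoneOp {d : ℕ} (A : Ed d → Set (Ed d)) : Prop :=
  IsMonotoneOp A ∧ ∀ A' : Ed d → Set (Ed d), IsMonotoneOp A' → (∀ u, A u ⊆ A' u) → A' = A

/-- The extended solution set `S` of `0 ∈ ∑ᵢ Aᵢ(z) + B(z)`. -/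
def extSolSet {d n : ℕ} (A : Fin n → Ed d → Set (Ed d)) (B : Ed d → Ed d) :
    Set (Ed d × (Fin (n + 1) → Ed d)) :=
  {p | (∀ i : Fin n, p.2 i.castSucc ∈ A i p.1) ∧ p.2 (Fin.last n) = B p.1 ∧ ∑ i, p.2 i = 0}

/-- Squared Euclidean distance `‖p - q‖²` in the product space `ℝ^{(n+2)d}`, for
`p = (z, w₁, …, w_{n+1})` and `q`. -/
def pDistSq {d n : ℕ} (z : Ed d) (w : Fin (n + 1) → Ed d)
    (q : Ed d × (Fin (n + 1) → Ed d)) : ℝ :=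
  ‖z - q.1‖ ^ 2 + ∑ i, ‖w i - q.2 i‖ ^ 2

/-- The σ-algebra `𝔉_k = σ(p¹, …, p^k)` generated by the first `k` SPS iterates. -/
def spsSigma {d n : ℕ} {Ω : Type} [MeasurableSpace Ω]
    (z : ℕ → Ω → Ed d) (w : ℕ → Fin (n + 1) → Ω → Ed d) (k : ℕ) : MeasurableSpace Ω :=
  ⨆ j ∈ Set.Icc 1 k,
    MeasurableSpace.comap (fun ω => (z j ω, fun i => w j i ω)) inferInstance

/-- The constant `C₁`. -/
def spsC1 (n : ℕ) (τ L N ρb : ℝ) : ℝ :=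
  24 * (1 + 10 * ρb ^ 2) * ((n : ℝ) + 1) * (L ^ 2 + 1) ^ 2 * (N + 1) ^ 2
    + 8 * ((n : ℝ) + 1) * (2 * τ ^ 2 + 6 * ((n : ℝ) + 1) + 1 + 3 * ((n : ℝ) + 1) ^ 2 / τ ^ 2)

/-- The constant `C₂`; here `Bz = B(z*)` and `sw = ∑_{i=1}^n wᵢ*`. -/
def spsC2 {d : ℕ} (n : ℕ) (L N ρb : ℝ) (Bz sw : Ed d) : ℝ :=
  16 * (N + 1) * (1 + 4 * ρb ^ 2 * ((n : ℝ) + 1) + 9 * ρb ^ 2 * L ^ 2 * (N + 1)) * ‖Bz‖ ^ 2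
    + 8 * ‖sw‖ ^ 2 + 12 * ρb ^ 2 * N * (2 * L ^ 2 * (N + 1) + (n : ℝ) + 1) + 4 * N

/-- The constant `C₃`. -/
def spsC3 (L N : ℝ) : ℝ := 4 * N * L ^ 3

/-- The constant `C₄`; here `Bz = B(z*)`. -/
def spsC4 {d : ℕ} (L N : ℝ) (Bz : Ed d) : ℝ := 2 * N * L * (1 + 2 * ‖Bz‖ ^ 2)

section Aux

set_option maxHeartbeats 1000000

private lemma sps_sq3 (p q r : ℝ) : (p + q + r)^2 ≤ 3*p^2 + 3*q^2 + 3*r^2 := by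
  nlinarith [sq_nonneg (p - q), sq_nonneg (p - r), sq_nonneg (q - r)]

private lemma sps_le_of_sq (a b : ℝ) (hb : 0 ≤ b) (h : a^2 ≤ b*a) : a ≤ b := by
  rcases le_or_gt a 0 with h0 | h0
  · linarith
  · nlinarith

private lemma sps_var_le {d m : ℕ} (v : Fin (m+1) → Ed d) (c : Ed d) :
    ∑ i, ‖v i - ((m:ℝ)+1)⁻¹ • ∑ j, v j‖^2 ≤ ∑ i, ‖v i - c‖^2 := by
  set μ := ((m:ℝ)+1)⁻¹ • ∑ j, v j with hμdef
  have hne : ((m:ℝ)+1) ≠ 0 := by positivity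
  have hsum : ∑ i, (v i - μ) = 0 := by
    have h1 : ((m:ℝ)+1) • μ = ∑ j, v j := by
      rw [hμdef, smul_smul, mul_inv_cancel₀ hne, one_smul]
    have h2 : ∑ i : Fin (m+1), (v i - μ) = (∑ j, v j) - (m+1 : ℕ) • μ := by
      rw [Finset.sum_sub_distrib, Finset.sum_const, Finset.card_univ, Fintype.card_fin]
    rw [h2, ← Nat.cast_smul_eq_nsmul ℝ, Nat.cast_add, Nat.cast_one, h1, sub_self]
  have key : ∀ i : Fin (m+1),
      ‖v i - c‖^2 = ‖v i - μ‖^2 + 2 * ⟪v i - μ, μ - c⟫ + ‖μ - c‖^2 := by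
    intro i
    rw [← norm_add_sq_real]
    congr 1
    abel
  have hs : ∑ i, ‖v i - c‖^2
      = ∑ i, ‖v i - μ‖^2 + 2 * ⟪∑ i, (v i - μ), μ - c⟫ + ((m:ℝ)+1) * ‖μ - c‖^2 := by
    simp_rw [key]
    rw [Finset.sum_add_distrib, Finset.sum_add_distrib, ← Finset.mul_sum, ← sum_inner,
      Finset.sum_const, Finset.card_univ, Fintype.card_fin, nsmul_eq_mul]
    push_cast
    ring
  rw [hs, hsum, inner_zero_left]
  have h0 : (0:ℝ) ≤ ((m:ℝ)+1) * ‖μ - c‖^2 := by positivity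
  linarith

private lemma sps_mono_u (L N : ℝ) (hL : 0 ≤ L) (hN : 0 ≤ N) :
    4*L^2 ≤ (L^2+1)^2*(N+1)^2 ∧ 4*N*L^2 ≤ (L^2+1)^2*(N+1)^2 ∧ 1 ≤ (L^2+1)^2*(N+1)^2 ∧
    L^4 ≤ (L^2+1)^2*(N+1)^2 ∧ N*L^4 ≤ (L^2+1)^2*(N+1)^2 ∧ N^2*L^4 ≤ (L^2+1)^2*(N+1)^2 ∧
    N*L^2 ≤ (L^2+1)^2*(N+1)^2 ∧ L^2 ≤ (L^2+1)^2*(N+1)^2 := by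
  have h1 : 4*L^2 ≤ (L^2+1)^2 := by nlinarith [sq_nonneg (L^2-1)]
  have h2 : 4*N ≤ (N+1)^2 := by nlinarith [sq_nonneg (N-1)]
  have h3 : (1:ℝ) ≤ (L^2+1)^2 := by nlinarith [sq_nonneg L, sq_nonneg (L^2)]
  have h4 : (1:ℝ) ≤ (N+1)^2 := by nlinarith
  have h5 : L^4 ≤ (L^2+1)^2 := by nlinarith [sq_nonneg L]
  have h6 : N ≤ (N+1)^2 := by nlinarith
  have h7 : N^2 ≤ (N+1)^2 := by nlinarith
  have hLu : (0:ℝ) ≤ (L^2+1)^2 := by positivity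
  refine ⟨?_, ?_, ?_, ?_, ?_, ?_, ?_, ?_⟩
  · calc 4*L^2 = (4*L^2)*1 := by ring
      _ ≤ (L^2+1)^2*(N+1)^2 := mul_le_mul h1 h4 zero_le_one hLu
  · calc 4*N*L^2 = (4*L^2)*N := by ring
      _ ≤ (L^2+1)^2*(N+1)^2 := mul_le_mul h1 h6 hN hLu
  · calc (1:ℝ) = 1*1 := by ring
      _ ≤ (L^2+1)^2*(N+1)^2 := mul_le_mul h3 h4 zero_le_one hLu
  · calc L^4 = L^4*1 := by ring
      _ ≤ (L^2+1)^2*(N+1)^2 := mul_le_mul h5 h4 zero_le_one hLu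
  · calc N*L^4 = L^4*N := by ring
      _ ≤ (L^2+1)^2*(N+1)^2 := mul_le_mul h5 h6 hN hLu
  · calc N^2*L^4 = L^4*N^2 := by ring
      _ ≤ (L^2+1)^2*(N+1)^2 := mul_le_mul h5 h7 (sq_nonneg N) hLu
  · calc N*L^2 = L^2*N := by ring
      _ ≤ (L^2+1)^2 * N := by gcongr; nlinarith [sq_nonneg L]
      _ ≤ (L^2+1)^2*(N+1)^2 := by gcongr
  · calc L^2 = L^2*1 := by ring
      _ ≤ (L^2+1)^2*(N+1)^2 :=
        mul_le_mul (by nlinarith [sq_nonneg L]) h4 zero_le_one hLu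

private lemma sps_coefA (n τ L N ρb : ℝ) (hn : 1 ≤ n) (hτ : 0 < τ) (hL : 0 ≤ L)
    (hN : 0 ≤ N) (hρ : 0 ≤ ρb)
    (m1 : 4*L^2 ≤ (L^2+1)^2*(N+1)^2) (m2 : 4*N*L^2 ≤ (L^2+1)^2*(N+1)^2)
    (m3 : 1 ≤ (L^2+1)^2*(N+1)^2) (m4 : L^4 ≤ (L^2+1)^2*(N+1)^2)
    (m5 : N*L^4 ≤ (L^2+1)^2*(N+1)^2) (m6 : N^2*L^4 ≤ (L^2+1)^2*(N+1)^2)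
    (m7 : N*L^2 ≤ (L^2+1)^2*(N+1)^2) (m8 : L^2 ≤ (L^2+1)^2*(N+1)^2) :
    24*n^2*(τ⁻¹)^2 + 3*(3*L^2+1)*(1+ρb*L)^2 + 2*n + 18*N*L^2*(1+ρb*L)^2
      + 2*L^2*(3*ρb^2*(3*L^2+1)*N + 18*N^2*L^2*ρb^2)
    ≤ 24*(1+10*ρb^2)*(n+1)*(L^2+1)^2*(N+1)^2
      + 8*(n+1)*(2*τ^2 + 6*(n+1) + 1 + 3*(n+1)^2/τ^2) := by
  have hu0 : (0:ℝ) ≤ (L^2+1)^2*(N+1)^2 := le_trans zero_le_one m3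
  have h2 : (1+ρb*L)^2 ≤ 2+2*ρb^2*L^2 := by nlinarith [sq_nonneg (1-ρb*L)]
  have hcoef1 : (0:ℝ) ≤ 3*(3*L^2+1) + 18*N*L^2 := by positivity
  have core1 : (3*(3*L^2+1) + 18*N*L^2)*(1+ρb*L)^2
      ≤ (3*(3*L^2+1)+18*N*L^2)*(2+2*ρb^2*L^2) :=
    mul_le_mul_of_nonneg_left h2 hcoef1
  have part1 : 18*L^2+6+36*N*L^2 ≤ 48*((L^2+1)^2*(N+1)^2) := by linarith
  have part2 : 18*L^4+6*L^2+36*N*L^4+(18*N*L^4+6*N*L^2+36*N^2*L^4)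
      ≤ 480*((L^2+1)^2*(N+1)^2) := by linarith
  have part2' : ρb^2*(18*L^4+6*L^2+36*N*L^4+(18*N*L^4+6*N*L^2+36*N^2*L^4))
      ≤ ρb^2*(480*((L^2+1)^2*(N+1)^2)) :=
    mul_le_mul_of_nonneg_left part2 (sq_nonneg ρb)
  have hτ2 : (0:ℝ) < τ^2 := by positivity
  have htau : 24*n^2*(τ⁻¹)^2 ≤ 8*(n+1)*(3*(n+1)^2/τ^2) := by
    have h' : 24*n^2 ≤ 24*(n+1)^3 := by nlinarith
    calc 24*n^2*(τ⁻¹)^2 = 24*n^2/τ^2 := by rw [inv_pow]; ring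
      _ ≤ 24*(n+1)^3/τ^2 := by gcongr
      _ = 8*(n+1)*(3*(n+1)^2/τ^2) := by ring
  have hfirst : 48*((L^2+1)^2*(N+1)^2) + ρb^2*(480*((L^2+1)^2*(N+1)^2))
      ≤ 24*(1+10*ρb^2)*(n+1)*(L^2+1)^2*(N+1)^2 := by
    have e1 : (0:ℝ) ≤ ((L^2+1)^2*(N+1)^2) * (n-1) :=
      mul_nonneg hu0 (by linarith)
    have e2 : (0:ℝ) ≤ ρb^2 * (((L^2+1)^2*(N+1)^2) * (n-1)) :=
      mul_nonneg (sq_nonneg ρb) e1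
    nlinarith [e1, e2]
  have hpos : (0:ℝ) ≤ 8*(n+1)*(2*τ^2+6*(n+1)) := by positivity
  have hn2 : 2*n ≤ 8*(n+1)*1 := by linarith
  nlinarith [core1, part1, part2', htau, hfirst, hpos, hn2]

private lemma sps_coefS (n τ L N ρb : ℝ) (hn : 1 ≤ n) (hτ : 0 < τ) (hL : 0 ≤ L)
    (hN : 0 ≤ N) (hρ : 0 ≤ ρb) :
    24*n + 2*τ^2
    ≤ 24*(1+10*ρb^2)*(n+1)*(L^2+1)^2*(N+1)^2
      + 8*(n+1)*(2*τ^2 + 6*(n+1) + 1 + 3*(n+1)^2/τ^2) := by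
  have h1 : (0:ℝ) ≤ 24*(1+10*ρb^2)*(n+1)*(L^2+1)^2*(N+1)^2 := by positivity
  have h2 : (0:ℝ) ≤ 8*(n+1)*(1 + 3*(n+1)^2/τ^2) := by positivity
  have h3 : 24*n ≤ 8*(n+1)*(6*(n+1)) := by nlinarith
  have h4 : 2*τ^2 ≤ 8*(n+1)*(2*τ^2) := by nlinarith [sq_nonneg τ]
  nlinarith [h1, h2, h3, h4]

private lemma sps_coefW (n τ L N ρb : ℝ) (hn : 1 ≤ n) (hτ : 0 < τ) (hL : 0 ≤ L)
    (hN : 0 ≤ N) (hρ : 0 ≤ ρb)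
    (m3 : 1 ≤ (L^2+1)^2*(N+1)^2) (m7 : N*L^2 ≤ (L^2+1)^2*(N+1)^2)
    (m8 : L^2 ≤ (L^2+1)^2*(N+1)^2) :
    3*ρb^2*(3*L^2+1) + 18*N*L^2*ρb^2
    ≤ 24*(1+10*ρb^2)*(n+1)*(L^2+1)^2*(N+1)^2
      + 8*(n+1)*(2*τ^2 + 6*(n+1) + 1 + 3*(n+1)^2/τ^2) := by
  have hu0 : (0:ℝ) ≤ (L^2+1)^2*(N+1)^2 := le_trans zero_le_one m3
  have h1 : 9*L^2+3+18*N*L^2 ≤ 240*((L^2+1)^2*(N+1)^2) := by linarith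
  have h1' : ρb^2*(9*L^2+3+18*N*L^2) ≤ ρb^2*(240*((L^2+1)^2*(N+1)^2)) :=
    mul_le_mul_of_nonneg_left h1 (sq_nonneg ρb)
  have h2 : (0:ℝ) ≤ 8*(n+1)*(2*τ^2 + 6*(n+1) + 1 + 3*(n+1)^2/τ^2) := by positivity
  nlinarith [h1', h2, hu0, mul_nonneg hu0 (by linarith : (0:ℝ) ≤ n-1),
    mul_nonneg (sq_nonneg ρb) (mul_nonneg hu0 (by linarith : (0:ℝ) ≤ n-1)),
    mul_nonneg (sq_nonneg ρb) hu0]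

private lemma sps_coefB (n L N ρb : ℝ) (hn : 1 ≤ n) (hL : 0 ≤ L) (hN : 0 ≤ N) (hρ : 0 ≤ ρb) :
    6*N + 2*(3*ρb^2*(3*L^2+1)*N + 18*N^2*L^2*ρb^2)
    ≤ 16*(N+1)*(1+4*ρb^2*(n+1)+9*ρb^2*L^2*(N+1)) := by
  have hA : 18*N*L^2+6*N+36*N^2*L^2 ≤ 64*(N+1)*(n+1) + 144*L^2*(N+1)^2 := by
    nlinarith [sq_nonneg L, mul_nonneg (sq_nonneg L) hN,
      mul_nonneg (sq_nonneg L) (mul_nonneg hN hN), hN, hn]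
  have hA' : ρb^2*(18*N*L^2+6*N+36*N^2*L^2) ≤ ρb^2*(64*(N+1)*(n+1) + 144*L^2*(N+1)^2) :=
    mul_le_mul_of_nonneg_left hA (sq_nonneg ρb)
  nlinarith [hA', hN]

private lemma sps_coefC0 (n L N ρb : ℝ) (hn : 1 ≤ n) (hL : 0 ≤ L) (hN : 0 ≤ N) (hρ : 0 ≤ ρb) :
    3*ρb^2*(3*L^2+1)*N + 3*N + 18*N^2*L^2*ρb^2
    ≤ 12*ρb^2*N*(2*L^2*(N+1)+n+1) + 4*N := by
  nlinarith [mul_nonneg (sq_nonneg ρb) (mul_nonneg hN (sq_nonneg L)),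
    mul_nonneg (sq_nonneg ρb) (mul_nonneg (mul_nonneg hN hN) (sq_nonneg L)),
    mul_nonneg (sq_nonneg ρb) (mul_nonneg hN (by linarith : (0:ℝ) ≤ n)),
    mul_nonneg (sq_nonneg ρb) hN, hN]


private lemma sps_G_sm {Ω : Type} {d n : ℕ} [mΩ : MeasurableSpace Ω]
    (zk : Ω → Ed d) (wk : Fin (n+1) → Ω → Ed d)
    (hzk : Measurable zk) (hwk : ∀ i, Measurable (wk i))
    (zs : Ed d) (ws : Fin (n+1) → Ed d) (c1 c2 c3 : ℝ) :
    StronglyMeasurable (fun ω => c1 * ‖zk ω - zs‖^2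
      + c2 * (∑ i : Fin n, ‖wk i.castSucc ω - ws i.castSucc‖^2)
      + c3 * ‖wk (Fin.last n) ω - ws (Fin.last n)‖^2) := by
  refine Measurable.stronglyMeasurable ?_
  refine Measurable.add (Measurable.add ?_ ?_) ?_
  · exact (((hzk.sub measurable_const).norm).pow_const 2).const_mul _
  · exact (Finset.measurable_sum _ fun i _ =>
      (((hwk i.castSucc).sub measurable_const).norm).pow_const 2).const_mul _
  · exact ((((hwk _).sub measurable_const).norm).pow_const 2).const_mul _

private lemma sps_Q_sm {Ω : Type} {d n : ℕ} [mΩ : MeasurableSpace Ω]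
    (zk : Ω → Ed d) (wk : Fin (n+1) → Ω → Ed d)
    (hzk : Measurable zk) (hwk : ∀ i, Measurable (wk i))
    (zs : Ed d) (ws : Fin (n+1) → Ed d) (c0 c1 c3 : ℝ) :
    StronglyMeasurable (fun ω => c0 + c1 * ‖zk ω - zs‖^2
      + c3 * ‖wk (Fin.last n) ω - ws (Fin.last n)‖^2) := by
  refine Measurable.stronglyMeasurable ?_
  refine Measurable.add (Measurable.add measurable_const ?_) ?_
  · exact (((hzk.sub measurable_const).norm).pow_const 2).const_mul _
  · exact ((((hwk _).sub measurable_const).norm).pow_const 2).const_mul _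

end Aux

set_option maxHeartbeats 2000000 in
/-- conditional bound on the squared norm of the hyperplane gradient. -/
theorem sps_gradient_bound
    {d n : ℕ} (hd : 1 ≤ d) (hn : 1 ≤ n)
    (τ : ℝ) (hτ : 0 < τ)
    (α ρ : ℕ → ℝ) (hα : ∀ k, 1 ≤ k → 0 < α k) (hρ : ∀ k, 1 ≤ k → 0 < ρ k)
    (A : Fin n → Ed d → Set (Ed d)) (hA : ∀ i, IsMaximalMonotoneOp (A i))
    (B : Ed d → Ed d) (L : ℝ) (hL : 0 < L)
    (hBmono : ∀ u v : Ed d, 0 ≤ ⟪B u - B v, u - v⟫)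
    (hBlip : ∀ u v : Ed d, ‖B u - B v‖ ≤ L * ‖u - v‖)
    (hS : (extSolSet A B).Nonempty)
    {Ω : Type} [MeasurableSpace Ω] (P : Measure Ω) [IsProbabilityMeasure P]
    (z : ℕ → Ω → Ed d) (w x y : ℕ → Fin (n + 1) → Ω → Ed d) (ε e : ℕ → Ω → Ed d)
    (hzm : ∀ k, Measurable (z k)) (hwm : ∀ k i, Measurable (w k i))
    (hxm : ∀ k i, Measurable (x k i)) (hym : ∀ k i, Measurable (y k i))
    (hεm : ∀ k, Measurable (ε k)) (hem : ∀ k, Measurable (e k))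
    (hw1 : ∀ ω, ∑ i, w 1 i ω = 0)
    (hyd : ∀ k, 1 ≤ k → ∀ (i : Fin n) (ω : Ω),
      y k i.castSucc ω = τ⁻¹ • (z k ω + τ • w k i.castSucc ω - x k i.castSucc ω))
    (hyres : ∀ k, 1 ≤ k → ∀ (i : Fin n) (ω : Ω), y k i.castSucc ω ∈ A i (x k i.castSucc ω))
    (hxl : ∀ k, 1 ≤ k → ∀ ω : Ω,
      x k (Fin.last n) ω = z k ω - ρ k • (B (z k ω) + ε k ω - w k (Fin.last n) ω))
    (hyl : ∀ k, 1 ≤ k → ∀ ω : Ω, y k (Fin.last n) ω = B (x k (Fin.last n) ω) + e k ω)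
    (hzu : ∀ k, 1 ≤ k → ∀ ω : Ω, z (k + 1) ω = z k ω - α k • ∑ i, y k i ω)
    (hwu : ∀ k, 1 ≤ k → ∀ (i : Fin (n + 1)) (ω : Ω),
      w (k + 1) i ω = w k i ω - α k • (x k i ω - ((n : ℝ) + 1)⁻¹ • ∑ j, x k j ω))
    (N : ℝ) (hN : 0 ≤ N)
    (hεL2 : ∀ k, 1 ≤ k → MemLp (ε k) 2 P) (heL2 : ∀ k, 1 ≤ k → MemLp (e k) 2 P)
    (hzL2 : ∀ k, 1 ≤ k → MemLp (z k) 2 P) (hwL2 : ∀ k, 1 ≤ k → ∀ i, MemLp (w k i) 2 P)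
    (hε0 : ∀ k, 1 ≤ k → ∀ᵐ ω ∂P, (P[ε k | spsSigma z w k]) ω = 0)
    (he0 : ∀ k, 1 ≤ k → ∀ᵐ ω ∂P, (P[e k | spsSigma z w k]) ω = 0)
    (hεv : ∀ k, 1 ≤ k → ∀ᵐ ω ∂P,
      (P[fun ω' => ‖ε k ω'‖ ^ 2 | spsSigma z w k]) ω ≤ N + N * ‖B (z k ω)‖ ^ 2)
    (hev : ∀ k, 1 ≤ k → ∀ᵐ ω ∂P,
      (P[fun ω' => ‖e k ω'‖ ^ 2 |
          spsSigma z w k ⊔ MeasurableSpace.comap (ε k) inferInstance]) ω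
        ≤ N + N * ‖B (x k (Fin.last n) ω)‖ ^ 2)
    (ρb : ℝ) (hρb : ∀ k, 1 ≤ k → ρ k ≤ ρb) :
    ∀ ps ∈ extSolSet A B, ∀ k, 1 ≤ k → ∀ᵐ ω ∂P,
      (P[fun ω' => ‖∑ i, y k i ω'‖ ^ 2
            + ∑ i : Fin (n + 1), ‖x k i ω' - ((n : ℝ) + 1)⁻¹ • ∑ j, x k j ω'‖ ^ 2 |
          spsSigma z w k]) ω
        ≤ spsC1 n τ L N ρb * pDistSq (z k ω) (fun i => w k i ω) ps
          + spsC2 n L N ρb (B ps.1) (∑ i : Fin n, ps.2 i.castSucc) := by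
  rintro ⟨zs, ws⟩ hps k hk
  obtain ⟨hws, hwlast, hwsum⟩ := hps
  simp only at hws hwlast hwsum
  -- basic positivity facts
  have hτ' : (0:ℝ) < τ⁻¹ := by positivity
  have hτne : τ ≠ 0 := ne_of_gt hτ
  have hρk : 0 < ρ k := hρ k hk
  have hρbpos : 0 < ρb := lt_of_lt_of_le hρk (hρb k hk)
  have hn1 : (1:ℝ) ≤ (n:ℝ) := by exact_mod_cast hn
  have hL0 : (0:ℝ) ≤ L := hL.le
  -- instantiated noise hypotheses
  have hεv' := hεv k hk
  have hev' := hev k hk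
  -- B is continuous
  have hBcont : Continuous B := by
    have hlip : LipschitzWith (Real.toNNReal L) B := by
      refine LipschitzWith.of_dist_le_mul fun u v => ?_
      rw [dist_eq_norm, dist_eq_norm, Real.coe_toNNReal L hL0]
      exact hBlip u v
    exact hlip.continuous
  -- σ-algebra facts
  have hm : spsSigma z w k ≤ ‹MeasurableSpace Ω› := by
    unfold spsSigma
    refine iSup₂_le fun j _ => ?_
    exact ((hzm j).prodMk (measurable_pi_lambda _ fun i => hwm j i)).comap_le
  have hm' : spsSigma z w k ⊔ MeasurableSpace.comap (ε k) inferInstance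
      ≤ ‹MeasurableSpace Ω› := sup_le hm (hεm k).comap_le
  have hpair : Measurable[spsSigma z w k] fun ω => (z k ω, fun i => w k i ω) := by
    refine Measurable.of_comap_le ?_
    unfold spsSigma
    exact le_iSup₂ (f := fun (j : ℕ) (_ : j ∈ Set.Icc 1 k) =>
      MeasurableSpace.comap (fun ω => (z j ω, fun i => w j i ω)) inferInstance) k ⟨hk, le_rfl⟩
  have hzkm : Measurable[spsSigma z w k] (z k) := measurable_fst.comp hpair
  have hwkm : ∀ i, Measurable[spsSigma z w k] (w k i) := fun i =>
    (measurable_pi_apply i).comp (measurable_snd.comp hpair)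
  -- pointwise deterministic bounds for coordinates i < n
  have hckey : ∀ (ω : Ω) (i : Fin n),
      ‖x k i.castSucc ω - zs‖ ≤ ‖z k ω - zs‖ + τ * ‖w k i.castSucc ω - ws i.castSucc‖ ∧
      ‖y k i.castSucc ω - ws i.castSucc‖
        ≤ 2 * τ⁻¹ * ‖z k ω - zs‖ + 2 * ‖w k i.castSucc ω - ws i.castSucc‖ := by
    intro ω i
    have hrep : τ • (y k i.castSucc ω - ws i.castSucc)
        = ((z k ω - zs) + τ • (w k i.castSucc ω - ws i.castSucc))
          - (x k i.castSucc ω - zs) := by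
      rw [hyd k hk i ω, smul_sub, smul_smul, mul_inv_cancel₀ hτne, one_smul]
      module
    have hrep' : y k i.castSucc ω - ws i.castSucc
        = τ⁻¹ • (((z k ω - zs) + τ • (w k i.castSucc ω - ws i.castSucc))
          - (x k i.castSucc ω - zs)) := by
      rw [← hrep, smul_smul, inv_mul_cancel₀ hτne, one_smul]
    have hmono : (0:ℝ) ≤ ⟪y k i.castSucc ω - ws i.castSucc, x k i.castSucc ω - zs⟫ :=
      (hA i).1 (hyres k hk i ω) (hws i)
    set U := (z k ω - zs) + τ • (w k i.castSucc ω - ws i.castSucc) with hU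
    set X := x k i.castSucc ω - zs with hX
    have h1 : (0:ℝ) ≤ τ⁻¹ * ⟪U - X, X⟫ := by
      rw [← real_inner_smul_left, ← hrep']; exact hmono
    have h2 : (0:ℝ) ≤ ⟪U - X, X⟫ := by
      by_contra hcon
      push_neg at hcon
      nlinarith [mul_pos hτ' (neg_pos.mpr hcon)]
    have h3 : ‖X‖^2 ≤ ⟪U, X⟫ := by
      rw [inner_sub_left] at h2
      have := @real_inner_self_eq_norm_sq (Ed d) _ _ X
      linarith
    have h4 : ⟪U, X⟫ ≤ ‖U‖ * ‖X‖ := real_inner_le_norm U X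
    have h5 : ‖X‖ ≤ ‖U‖ := sps_le_of_sq _ _ (norm_nonneg U) (by nlinarith)
    have hUb : ‖U‖ ≤ ‖z k ω - zs‖ + τ * ‖w k i.castSucc ω - ws i.castSucc‖ := by
      refine (norm_add_le _ _).trans ?_
      rw [norm_smul, Real.norm_eq_abs, abs_of_pos hτ]
    refine ⟨h5.trans hUb, ?_⟩
    rw [hrep', norm_smul, Real.norm_eq_abs, abs_of_pos hτ']
    have h6 : ‖U - X‖ ≤ ‖U‖ + ‖X‖ := norm_sub_le _ _
    have h7 : ‖U - X‖
        ≤ 2*(‖z k ω - zs‖ + τ * ‖w k i.castSucc ω - ws i.castSucc‖) := by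
      linarith [h5.trans hUb]
    calc τ⁻¹ * ‖U - X‖
        ≤ τ⁻¹ * (2*(‖z k ω - zs‖ + τ * ‖w k i.castSucc ω - ws i.castSucc‖)) :=
          mul_le_mul_of_nonneg_left h7 hτ'.le
      _ = 2 * τ⁻¹ * ‖z k ω - zs‖ + 2 * (τ⁻¹*τ) * ‖w k i.castSucc ω - ws i.castSucc‖ := by
          ring
      _ = 2 * τ⁻¹ * ‖z k ω - zs‖ + 2 * ‖w k i.castSucc ω - ws i.castSucc‖ := by
          rw [inv_mul_cancel₀ hτne]; ring
  -- pointwise bound for the last coordinate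
  have hXl : ∀ ω : Ω, ‖x k (Fin.last n) ω - zs‖
      ≤ (1 + ρb*L) * ‖z k ω - zs‖ + ρb * ‖ε k ω‖
        + ρb * ‖w k (Fin.last n) ω - ws (Fin.last n)‖ := by
    intro ω
    have h1 : x k (Fin.last n) ω - zs
        = (z k ω - zs) - ρ k • ((B (z k ω) - B zs) + ε k ω
            - (w k (Fin.last n) ω - ws (Fin.last n))) := by
      rw [hxl k hk ω, hwlast]
      module
    rw [h1]
    refine (norm_sub_le _ _).trans ?_
    rw [norm_smul, Real.norm_eq_abs, abs_of_pos hρk]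
    have h2 : ‖(B (z k ω) - B zs) + ε k ω - (w k (Fin.last n) ω - ws (Fin.last n))‖
        ≤ L * ‖z k ω - zs‖ + ‖ε k ω‖ + ‖w k (Fin.last n) ω - ws (Fin.last n)‖ := by
      refine (norm_sub_le _ _).trans ?_
      have hb := norm_add_le (B (z k ω) - B zs) (ε k ω)
      have hc := hBlip (z k ω) zs
      linarith
    have h3 : ρ k * ‖(B (z k ω) - B zs) + ε k ω - (w k (Fin.last n) ω - ws (Fin.last n))‖
        ≤ ρb * (L * ‖z k ω - zs‖ + ‖ε k ω‖ + ‖w k (Fin.last n) ω - ws (Fin.last n)‖) :=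
      mul_le_mul (hρb k hk) h2 (norm_nonneg _) hρbpos.le
    nlinarith [h3]
  have hXl2 : ∀ ω : Ω, ‖x k (Fin.last n) ω - zs‖^2
      ≤ 3*(1+ρb*L)^2*‖z k ω - zs‖^2 + 3*ρb^2*‖ε k ω‖^2
        + 3*ρb^2*‖w k (Fin.last n) ω - ws (Fin.last n)‖^2 := by
    intro ω
    have h1 := pow_le_pow_left₀ (norm_nonneg _) (hXl ω) 2
    have h2 := sps_sq3 ((1 + ρb*L) * ‖z k ω - zs‖) (ρb * ‖ε k ω‖)
      (ρb * ‖w k (Fin.last n) ω - ws (Fin.last n)‖)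
    nlinarith [h1, h2]
  have hBzsq : ∀ ω : Ω, ‖B (z k ω)‖^2 ≤ 2*‖B zs‖^2 + 2*L^2*‖z k ω - zs‖^2 := by
    intro ω
    have h := hBlip (z k ω) zs
    have h2 := norm_sub_norm_le (B (z k ω)) (B zs)
    have h3 : ‖B (z k ω)‖ ≤ ‖B zs‖ + L * ‖z k ω - zs‖ := by linarith
    nlinarith [h3, norm_nonneg (B (z k ω)), norm_nonneg (B zs),
      norm_nonneg (z k ω - zs), sq_nonneg (‖B zs‖ - L*‖z k ω - zs‖),
      mul_nonneg hL0 (norm_nonneg (z k ω - zs))]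
  have hE4q : ∀ ω : Ω, ‖B (x k (Fin.last n) ω)‖^2
      ≤ (2*‖B zs‖^2 + 6*L^2*(1+ρb*L)^2*‖z k ω - zs‖^2
          + 6*L^2*ρb^2*‖w k (Fin.last n) ω - ws (Fin.last n)‖^2)
        + (6*L^2*ρb^2) * ‖ε k ω‖^2 := by
    intro ω
    have h := hBlip (x k (Fin.last n) ω) zs
    have h2 := norm_sub_norm_le (B (x k (Fin.last n) ω)) (B zs)
    have h3 : ‖B (x k (Fin.last n) ω)‖ ≤ ‖B zs‖ + L * ‖x k (Fin.last n) ω - zs‖ := by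
      linarith
    have h4 : ‖B (x k (Fin.last n) ω)‖^2
        ≤ 2*‖B zs‖^2 + 2*L^2*‖x k (Fin.last n) ω - zs‖^2 := by
      nlinarith [h3, norm_nonneg (B (x k (Fin.last n) ω)), norm_nonneg (B zs),
        norm_nonneg (x k (Fin.last n) ω - zs), sq_nonneg (‖B zs‖ - L*‖x k (Fin.last n) ω - zs‖),
        mul_nonneg hL0 (norm_nonneg (x k (Fin.last n) ω - zs))]
    have h5 : (2*L^2)*‖x k (Fin.last n) ω - zs‖^2
        ≤ (2*L^2)*(3*(1+ρb*L)^2*‖z k ω - zs‖^2 + 3*ρb^2*‖ε k ω‖^2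
            + 3*ρb^2*‖w k (Fin.last n) ω - ws (Fin.last n)‖^2) :=
      mul_le_mul_of_nonneg_left (hXl2 ω) (by positivity)
    nlinarith [h4, h5]
  -- Memℒp facts
  have hzc : MemLp (fun ω => z k ω - zs) 2 P := (hzL2 k hk).sub (memLp_const zs)
  have hwc : ∀ i, MemLp (fun ω => w k i ω - ws i) 2 P := fun i =>
    (hwL2 k hk i).sub (memLp_const _)
  have hnormb : ∀ (f : Ω → Ed d) (g : Ω → ℝ), Measurable f → MemLp g 2 P →
      (∀ ω, ‖f ω‖ ≤ g ω) → MemLp f 2 P := by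
    intro f g hf hg hfg
    refine hg.of_le hf.aestronglyMeasurable (ae_of_all _ fun ω => ?_)
    exact (hfg ω).trans ((le_abs_self _).trans_eq (Real.norm_eq_abs _).symm)
  have hxc2 : ∀ i : Fin n, MemLp (x k i.castSucc) 2 P := by
    intro i
    refine hnormb _ (fun ω => (‖z k ω - zs‖ + τ*‖w k i.castSucc ω - ws i.castSucc‖) + ‖zs‖)
      (hxm k i.castSucc) ((hzc.norm.add ((hwc i.castSucc).norm.const_mul τ)).add
        (memLp_const _)) (fun ω => ?_)
    have h := (hckey ω i).1
    calc ‖x k i.castSucc ω‖ = ‖(x k i.castSucc ω - zs) + zs‖ := by rw [sub_add_cancel]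
      _ ≤ ‖x k i.castSucc ω - zs‖ + ‖zs‖ := norm_add_le _ _
      _ ≤ (‖z k ω - zs‖ + τ*‖w k i.castSucc ω - ws i.castSucc‖) + ‖zs‖ := by linarith
  have hyc2 : ∀ i : Fin n, MemLp (y k i.castSucc) 2 P := by
    intro i
    have heq : y k i.castSucc
        = fun ω => τ⁻¹ • (z k ω + τ • w k i.castSucc ω - x k i.castSucc ω) :=
      funext (hyd k hk i)
    rw [heq]
    exact (((hzL2 k hk).add ((hwL2 k hk i.castSucc).const_smul τ)).sub (hxc2 i)).const_smul τ⁻¹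
  have hBz2 : MemLp (fun ω => B (z k ω)) 2 P := by
    refine hnormb _ (fun ω => ‖B zs‖ + L*‖z k ω - zs‖) (hBcont.measurable.comp (hzm k))
      ((memLp_const ‖B zs‖).add (hzc.norm.const_mul L)) (fun ω => ?_)
    have h := hBlip (z k ω) zs
    have h2 := norm_sub_norm_le (B (z k ω)) (B zs)
    linarith
  have hxlast2 : MemLp (x k (Fin.last n)) 2 P := by
    have heq : x k (Fin.last n)
        = fun ω => z k ω - ρ k • (B (z k ω) + ε k ω - w k (Fin.last n) ω) :=
      funext (hxl k hk)
    rw [heq]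
    exact (hzL2 k hk).sub (((hBz2.add (hεL2 k hk)).sub (hwL2 k hk _)).const_smul (ρ k))
  have hBxl2 : MemLp (fun ω => B (x k (Fin.last n) ω)) 2 P := by
    refine hnormb _ (fun ω => ‖B zs‖ + L*‖x k (Fin.last n) ω - zs‖)
      (hBcont.measurable.comp (hxm k _))
      ((memLp_const ‖B zs‖).add (((hxlast2.sub (memLp_const zs)).norm).const_mul L)) (fun ω => ?_)
    have h := hBlip (x k (Fin.last n) ω) zs
    have h2 := norm_sub_norm_le (B (x k (Fin.last n) ω)) (B zs)
    linarith
  have hylast2 : MemLp (y k (Fin.last n)) 2 P := by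
    have heq : y k (Fin.last n) = fun ω => B (x k (Fin.last n) ω) + e k ω :=
      funext (hyl k hk)
    rw [heq]
    exact hBxl2.add (heL2 k hk)
  have hx2 : ∀ i : Fin (n+1), MemLp (x k i) 2 P := by
    intro i
    induction i using Fin.lastCases with
    | last => exact hxlast2
    | cast i => exact hxc2 i
  have hy2 : ∀ i : Fin (n+1), MemLp (y k i) 2 P := by
    intro i
    induction i using Fin.lastCases with
    | last => exact hylast2
    | cast i => exact hyc2 i
  have hsqint : ∀ (f : Ω → Ed d), MemLp f 2 P → Integrable (fun ω => ‖f ω‖^2) P :=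
    fun f hf => hf.norm.integrable_sq
  have hE2int : Integrable (fun ω => ‖ε k ω‖^2) P := hsqint _ (hεL2 k hk)
  have hE3int : Integrable (fun ω => ‖e k ω‖^2) P := hsqint _ (heL2 k hk)
  have hE4int : Integrable (fun ω => ‖B (x k (Fin.last n) ω)‖^2) P := hsqint _ hBxl2
  have hZsqint : Integrable (fun ω => ‖z k ω - zs‖^2) P := hsqint _ hzc
  have hWsqint : ∀ i, Integrable (fun ω => ‖w k i ω - ws i‖^2) P := fun i => hsqint _ (hwc i)
  -- named functions
  set Ff : Ω → ℝ := fun ω' => ‖∑ i, y k i ω'‖ ^ 2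
      + ∑ i : Fin (n + 1), ‖x k i ω' - ((n : ℝ) + 1)⁻¹ • ∑ j, x k j ω'‖ ^ 2 with hFfdef
  set E2f : Ω → ℝ := fun ω' => ‖ε k ω'‖ ^ 2 with hE2fdef
  set E3f : Ω → ℝ := fun ω' => ‖e k ω'‖ ^ 2 with hE3fdef
  set E4f : Ω → ℝ := fun ω' => ‖B (x k (Fin.last n) ω')‖ ^ 2 with hE4fdef
  set Gf : Ω → ℝ := fun ω' =>
      (24*(n:ℝ)^2*(τ⁻¹)^2 + 3*(3*L^2+1)*(1+ρb*L)^2 + 2*(n:ℝ)) * ‖z k ω' - zs‖^2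
      + (24*(n:ℝ) + 2*τ^2) * (∑ i : Fin n, ‖w k i.castSucc ω' - ws i.castSucc‖^2)
      + (3*ρb^2*(3*L^2+1)) * ‖w k (Fin.last n) ω' - ws (Fin.last n)‖^2 with hGfdef
  set Qf : Ω → ℝ := fun ω' => 2*‖B zs‖^2 + 6*L^2*(1+ρb*L)^2*‖z k ω' - zs‖^2
      + 6*L^2*ρb^2*‖w k (Fin.last n) ω' - ws (Fin.last n)‖^2 with hQfdef
  -- master pointwise inequality
  have hFg : ∀ ω : Ω, Ff ω ≤ Gf ω + (3*ρb^2*(3*L^2+1)) * E2f ω + 3 * E3f ω := by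
    intro ω
    have hyb : ∀ i : Fin n, ‖y k i.castSucc ω - ws i.castSucc‖^2
        ≤ 8*(τ⁻¹)^2*‖z k ω - zs‖^2 + 8*‖w k i.castSucc ω - ws i.castSucc‖^2 := by
      intro i
      have h := (hckey ω i).2
      nlinarith [h, norm_nonneg (y k i.castSucc ω - ws i.castSucc),
        norm_nonneg (z k ω - zs), norm_nonneg (w k i.castSucc ω - ws i.castSucc),
        hτ'.le, sq_nonneg (τ⁻¹*‖z k ω - zs‖ - ‖w k i.castSucc ω - ws i.castSucc‖),
        mul_nonneg hτ'.le (norm_nonneg (z k ω - zs))]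
    have hxb : ∀ i : Fin n, ‖x k i.castSucc ω - zs‖^2
        ≤ 2*‖z k ω - zs‖^2 + 2*τ^2*‖w k i.castSucc ω - ws i.castSucc‖^2 := by
      intro i
      have h := (hckey ω i).1
      nlinarith [h, norm_nonneg (x k i.castSucc ω - zs), norm_nonneg (z k ω - zs),
        norm_nonneg (w k i.castSucc ω - ws i.castSucc), hτ.le,
        sq_nonneg (‖z k ω - zs‖ - τ*‖w k i.castSucc ω - ws i.castSucc‖),
        mul_nonneg hτ.le (norm_nonneg (w k i.castSucc ω - ws i.castSucc))]
    have hsy : ∑ i : Fin n, ‖y k i.castSucc ω - ws i.castSucc‖^2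
        ≤ (n:ℝ)*(8*(τ⁻¹)^2*‖z k ω - zs‖^2)
          + 8*∑ i : Fin n, ‖w k i.castSucc ω - ws i.castSucc‖^2 := by
      calc ∑ i : Fin n, ‖y k i.castSucc ω - ws i.castSucc‖^2
          ≤ ∑ i : Fin n, (8*(τ⁻¹)^2*‖z k ω - zs‖^2
              + 8*‖w k i.castSucc ω - ws i.castSucc‖^2) :=
            Finset.sum_le_sum fun i _ => hyb i
        _ = (n:ℝ)*(8*(τ⁻¹)^2*‖z k ω - zs‖^2)
              + 8*∑ i : Fin n, ‖w k i.castSucc ω - ws i.castSucc‖^2 := by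
            rw [Finset.sum_add_distrib, Finset.sum_const, Finset.card_univ,
              Fintype.card_fin, nsmul_eq_mul, ← Finset.mul_sum]
    have hsx : ∑ i : Fin n, ‖x k i.castSucc ω - zs‖^2
        ≤ (n:ℝ)*(2*‖z k ω - zs‖^2)
          + 2*τ^2*∑ i : Fin n, ‖w k i.castSucc ω - ws i.castSucc‖^2 := by
      calc ∑ i : Fin n, ‖x k i.castSucc ω - zs‖^2
          ≤ ∑ i : Fin n, (2*‖z k ω - zs‖^2
              + 2*τ^2*‖w k i.castSucc ω - ws i.castSucc‖^2) :=
            Finset.sum_le_sum fun i _ => hxb i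
        _ = _ := by
            rw [Finset.sum_add_distrib, Finset.sum_const, Finset.card_univ,
              Fintype.card_fin, nsmul_eq_mul, ← Finset.mul_sum]
    have hcs : (∑ i : Fin n, ‖y k i.castSucc ω - ws i.castSucc‖)^2
        ≤ (n:ℝ) * ∑ i : Fin n, ‖y k i.castSucc ω - ws i.castSucc‖^2 := by
      have h := sq_sum_le_card_mul_sum_sq (s := (Finset.univ : Finset (Fin n)))
        (f := fun i => ‖y k i.castSucc ω - ws i.castSucc‖)
      simpa using h
    have hsum_split : ∑ i, y k i ω
        = (∑ i : Fin n, (y k i.castSucc ω - ws i.castSucc))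
          + ((B (x k (Fin.last n) ω) - B zs) + e k ω) := by
      have h0 : ∑ i : Fin (n+1), (y k i ω - ws i) = ∑ i, y k i ω := by
        rw [Finset.sum_sub_distrib, hwsum, sub_zero]
      rw [← h0, Fin.sum_univ_castSucc]
      congr 1
      rw [hyl k hk ω, hwlast]
      abel
    have hny : ‖∑ i, y k i ω‖
        ≤ (∑ i : Fin n, ‖y k i.castSucc ω - ws i.castSucc‖)
          + (L*‖x k (Fin.last n) ω - zs‖ + ‖e k ω‖) := by
      rw [hsum_split]
      refine (norm_add_le _ _).trans (add_le_add (norm_sum_le _ _) ?_)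
      exact (norm_add_le _ _).trans (add_le_add (hBlip _ _) le_rfl)
    have hny2 : ‖∑ i, y k i ω‖^2
        ≤ 3*(∑ i : Fin n, ‖y k i.castSucc ω - ws i.castSucc‖)^2
          + 3*L^2*‖x k (Fin.last n) ω - zs‖^2 + 3*‖e k ω‖^2 := by
      have h1 := pow_le_pow_left₀ (norm_nonneg (∑ i, y k i ω)) hny 2
      have h2 := sps_sq3 (∑ i : Fin n, ‖y k i.castSucc ω - ws i.castSucc‖)
        (L*‖x k (Fin.last n) ω - zs‖) ‖e k ω‖
      nlinarith [h1, h2]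
    have hvar := sps_var_le (fun i => x k i ω) zs
    have hsplitx : ∑ i : Fin (n+1), ‖x k i ω - zs‖^2
        = ∑ i : Fin n, ‖x k i.castSucc ω - zs‖^2 + ‖x k (Fin.last n) ω - zs‖^2 :=
      Fin.sum_univ_castSucc _
    have hxl3 : (3*L^2+1)*‖x k (Fin.last n) ω - zs‖^2
        ≤ (3*L^2+1)*(3*(1+ρb*L)^2*‖z k ω - zs‖^2 + 3*ρb^2*‖ε k ω‖^2
            + 3*ρb^2*‖w k (Fin.last n) ω - ws (Fin.last n)‖^2) :=
      mul_le_mul_of_nonneg_left (hXl2 ω) (by positivity)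
    have hsy3 : (3*(n:ℝ))*(∑ i : Fin n, ‖y k i.castSucc ω - ws i.castSucc‖^2)
        ≤ (3*(n:ℝ))*((n:ℝ)*(8*(τ⁻¹)^2*‖z k ω - zs‖^2)
            + 8*∑ i : Fin n, ‖w k i.castSucc ω - ws i.castSucc‖^2) :=
      mul_le_mul_of_nonneg_left hsy (by positivity)
    have hcs3 : 3*(∑ i : Fin n, ‖y k i.castSucc ω - ws i.castSucc‖)^2
        ≤ 3*((n:ℝ) * ∑ i : Fin n, ‖y k i.castSucc ω - ws i.castSucc‖^2) := by
      linarith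
    simp only [hFfdef, hGfdef, hE2fdef, hE3fdef]
    linarith [hny2, hvar, hsplitx, hsx, hsy3, hcs3, hxl3]
  -- integrability of the named functions
  have hGfint : Integrable Gf P := by
    rw [hGfdef]
    exact ((hZsqint.const_mul _).add ((integrable_finset_sum _
      fun i _ => hWsqint i.castSucc).const_mul _)).add ((hWsqint _).const_mul _)
  have hQfint : Integrable Qf P := by
    rw [hQfdef]
    exact ((integrable_const _).add (hZsqint.const_mul _)).add ((hWsqint _).const_mul _)
  have hgfint : Integrable (Gf + (3*ρb^2*(3*L^2+1)) • E2f + (3:ℝ) • E3f) P :=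
    (hGfint.add (hE2int.smul _)).add (hE3int.smul _)
  have hsumy2 : MemLp (fun ω => ∑ i, y k i ω) 2 P :=
    memLp_finset_sum _ fun i _ => hy2 i
  have hsumx2 : MemLp (fun ω => ∑ j, x k j ω) 2 P :=
    memLp_finset_sum _ fun i _ => hx2 i
  have hdev2 : ∀ i : Fin (n+1),
      MemLp (fun ω => x k i ω - ((n:ℝ)+1)⁻¹ • ∑ j, x k j ω) 2 P :=
    fun i => (hx2 i).sub (hsumx2.const_smul ((n:ℝ)+1)⁻¹)
  have hFfint : Integrable Ff P := by
    rw [hFfdef]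
    exact (hsqint _ hsumy2).add (integrable_finset_sum _ fun i _ => hsqint _ (hdev2 i))
  -- strong measurability with respect to the filtration
  have hGfsm : StronglyMeasurable[spsSigma z w k] Gf := by
    rw [hGfdef]
    exact sps_G_sm (mΩ := spsSigma z w k) (z k) (w k) hzkm hwkm zs ws _ _ _
  have hQfsm : StronglyMeasurable[spsSigma z w k] Qf := by
    rw [hQfdef]
    exact sps_Q_sm (mΩ := spsSigma z w k) (z k) (w k) hzkm hwkm zs ws _ _ _
  -- conditional expectation computations
  have hcond1 : P[Ff|spsSigma z w k]
      ≤ᵐ[P] P[Gf + (3*ρb^2*(3*L^2+1)) • E2f + (3:ℝ) • E3f|spsSigma z w k] :=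
    condExp_mono hFfint hgfint (ae_of_all _ hFg)
  have hA1 : P[Gf + (3*ρb^2*(3*L^2+1)) • E2f + (3:ℝ) • E3f|spsSigma z w k]
      =ᵐ[P] P[Gf + (3*ρb^2*(3*L^2+1)) • E2f|spsSigma z w k]
        + P[(3:ℝ) • E3f|spsSigma z w k] :=
    condExp_add (hGfint.add (hE2int.smul _)) (hE3int.smul _) _
  have hA2 : P[Gf + (3*ρb^2*(3*L^2+1)) • E2f|spsSigma z w k]
      =ᵐ[P] P[Gf|spsSigma z w k] + P[(3*ρb^2*(3*L^2+1)) • E2f|spsSigma z w k] :=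
    condExp_add hGfint (hE2int.smul _) _
  have hA3 : P[(3*ρb^2*(3*L^2+1)) • E2f|spsSigma z w k]
      =ᵐ[P] (3*ρb^2*(3*L^2+1)) • P[E2f|spsSigma z w k] := condExp_smul _ _ _
  have hA4 : P[(3:ℝ) • E3f|spsSigma z w k]
      =ᵐ[P] (3:ℝ) • P[E3f|spsSigma z w k] := condExp_smul _ _ _
  have hA5 : P[Gf|spsSigma z w k] = Gf :=
    condExp_of_stronglyMeasurable hm hGfsm hGfint
  have hB1 : P[E3f|spsSigma z w k]
      =ᵐ[P] P[P[E3f|spsSigma z w k ⊔ MeasurableSpace.comap (ε k) inferInstance]|spsSigma z w k] :=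
    (condExp_condExp_of_le le_sup_left hm').symm
  have hev'' : P[E3f|spsSigma z w k ⊔ MeasurableSpace.comap (ε k) inferInstance]
      ≤ᵐ[P] (fun _ => N) + N • E4f := hev'
  have hB2 : P[P[E3f|spsSigma z w k ⊔ MeasurableSpace.comap (ε k) inferInstance]|spsSigma z w k]
      ≤ᵐ[P] P[(fun _ => N) + N • E4f|spsSigma z w k] :=
    condExp_mono integrable_condExp ((integrable_const _).add (hE4int.smul _)) hev''
  have hB3a : P[(fun _ => N) + N • E4f|spsSigma z w k]
      =ᵐ[P] P[(fun _ : Ω => N)|spsSigma z w k] + P[N • E4f|spsSigma z w k] :=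
    condExp_add (integrable_const _) (hE4int.smul _) _
  have hB3b : P[(fun _ : Ω => N)|spsSigma z w k] = fun _ => N := condExp_const hm _
  have hB3c : P[N • E4f|spsSigma z w k] =ᵐ[P] N • P[E4f|spsSigma z w k] := condExp_smul _ _ _
  have hE4q' : ∀ ω : Ω, E4f ω ≤ (Qf + (6*L^2*ρb^2) • E2f) ω := by
    intro ω
    simp only [hE4fdef, hQfdef, hE2fdef, Pi.add_apply, Pi.smul_apply, smul_eq_mul]
    exact hE4q ω
  have hB4 : P[E4f|spsSigma z w k]
      ≤ᵐ[P] P[Qf + (6*L^2*ρb^2) • E2f|spsSigma z w k] :=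
    condExp_mono hE4int (hQfint.add (hE2int.smul _)) (ae_of_all _ hE4q')
  have hB5 : P[Qf + (6*L^2*ρb^2) • E2f|spsSigma z w k]
      =ᵐ[P] P[Qf|spsSigma z w k] + P[(6*L^2*ρb^2) • E2f|spsSigma z w k] :=
    condExp_add hQfint (hE2int.smul _) _
  have hB6 : P[Qf|spsSigma z w k] = Qf :=
    condExp_of_stronglyMeasurable hm hQfsm hQfint
  have hB7 : P[(6*L^2*ρb^2) • E2f|spsSigma z w k]
      =ᵐ[P] (6*L^2*ρb^2) • P[E2f|spsSigma z w k] := condExp_smul _ _ _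
  -- final assembly
  obtain ⟨m1, m2, m3, m4, m5, m6, m7, m8⟩ := sps_mono_u L N hL0 hN
  have HA := sps_coefA (n:ℝ) τ L N ρb hn1 hτ hL0 hN hρbpos.le m1 m2 m3 m4 m5 m6 m7 m8
  have HS := sps_coefS (n:ℝ) τ L N ρb hn1 hτ hL0 hN hρbpos.le
  have HW := sps_coefW (n:ℝ) τ L N ρb hn1 hτ hL0 hN hρbpos.le m3 m7 m8
  have HB := sps_coefB (n:ℝ) L N ρb hn1 hL0 hN hρbpos.le
  have HC0 := sps_coefC0 (n:ℝ) L N ρb hn1 hL0 hN hρbpos.le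
  filter_upwards [hcond1, hA1, hA2, hA3, hA4, hB1, hB2, hB3a, hB3c, hB4, hB5, hB7, hεv']
    with ω h1 a1 a2 a3 a4 b1 b2 b3a b3c b4 b5 b7 hε2
  simp only [Pi.add_apply, Pi.smul_apply, smul_eq_mul] at a1 a2 a3 a4 b1 b2 b3a b3c b4 b5 b7
  have a5 : (P[Gf|spsSigma z w k]) ω = Gf ω := by rw [hA5]
  have b3b : (P[(fun _ : Ω => N)|spsSigma z w k]) ω = N := by rw [hB3b]
  have b6 : (P[Qf|spsSigma z w k]) ω = Qf ω := by rw [hB6]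
  have hr4 : (P[E4f|spsSigma z w k]) ω
      ≤ Qf ω + (6*L^2*ρb^2) * (P[E2f|spsSigma z w k]) ω := by linarith [b4, b5, b6, b7]
  have hr3 : (P[E3f|spsSigma z w k]) ω ≤ N + N * (P[E4f|spsSigma z w k]) ω := by
    linarith [b1, b2, b3a, b3b, b3c]
  have e1 : (P[Ff|spsSigma z w k]) ω
      ≤ Gf ω + (3*ρb^2*(3*L^2+1)) * (P[E2f|spsSigma z w k]) ω
        + 3 * (P[E3f|spsSigma z w k]) ω := by linarith [h1, a1, a2, a3, a4, a5]
  have pB := hBzsq ω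
  have p1 : 3*N * (P[E4f|spsSigma z w k]) ω
      ≤ 3*N * (Qf ω + (6*L^2*ρb^2) * (P[E2f|spsSigma z w k]) ω) :=
    mul_le_mul_of_nonneg_left hr4 (by positivity)
  have p2 : (3*ρb^2*(3*L^2+1)) * (P[E2f|spsSigma z w k]) ω
      ≤ (3*ρb^2*(3*L^2+1)) * (N + N * ‖B (z k ω)‖ ^ 2) :=
    mul_le_mul_of_nonneg_left hε2 (by positivity)
  have p3 : (3*N*(6*L^2*ρb^2)) * (P[E2f|spsSigma z w k]) ω
      ≤ (3*N*(6*L^2*ρb^2)) * (N + N * ‖B (z k ω)‖ ^ 2) :=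
    mul_le_mul_of_nonneg_left hε2 (by positivity)
  have p4 : (3*ρb^2*(3*L^2+1)*N + 18*N^2*L^2*ρb^2) * ‖B (z k ω)‖ ^ 2
      ≤ (3*ρb^2*(3*L^2+1)*N + 18*N^2*L^2*ρb^2) * (2*‖B zs‖^2 + 2*L^2*‖z k ω - zs‖^2) :=
    mul_le_mul_of_nonneg_left pB (by positivity)
  have q1 := mul_le_mul_of_nonneg_right HA (sq_nonneg ‖z k ω - zs‖)
  have hSb0 : (0:ℝ) ≤ ∑ i : Fin n, ‖w k i.castSucc ω - ws i.castSucc‖^2 :=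
    Finset.sum_nonneg fun i _ => sq_nonneg _
  have q2 := mul_le_mul_of_nonneg_right HS hSb0
  have q3 := mul_le_mul_of_nonneg_right HW (sq_nonneg ‖w k (Fin.last n) ω - ws (Fin.last n)‖)
  have q4 := mul_le_mul_of_nonneg_right HB (sq_nonneg ‖B zs‖)
  have hsw0 : (0:ℝ) ≤ 8*‖∑ i : Fin n, ws i.castSucc‖^2 := by positivity
  simp only [spsC1, spsC2, pDistSq]
  rw [Fin.sum_univ_castSucc]
  simp only [hGfdef, hQfdef] at e1 p1 ⊢
  linarith [e1, hr3, p1, p2, p3, p4, q1, q2, q3, q4, HC0, hsw0]
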